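/- arXiv:1106.6024 — 5 statements merged into one kernel-verified Lean document; each statement's English description precedes it below -/
import Mathlib

section
/- Let Z ⊆ {1,…,m} and F = {1,…,m} \ Z be the zero-loss and finite-margin sets given by the Decomposition Lemma for the feature matrix M, with F nonempty, and let K = inf_{η∈ℝ^N} ∑_{i∈F} exp(−(Mη)_i). Then there exist constants C₁ > 0 and C₂ > 0 depending only on M (not on θ) such that: for any λ ∈ ℝ^N with ∑_{i=1}^m exp(−(Mλ)_i) = K + θ for some θ > 0, K + θ ≤ m, and ∑_{i∈Z} exp(−(Mλ)_i) < C₁·θ, the maximum coordinate edge δ = max_j |∑_{i=1}^m exp(−(Mλ)_i)·M_{ij}| / (∑_{i=1}^m exp(−(Mλ)_i)) satisfies (K+θ)·√(1−δ²) ≤ K + θ − C₂·θ; in particular, one round of AdaBoost from λ reduces the suboptimality θ by at least C₂·θ. -/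
/-- The ℓ₁-norm on `ℝ^N`. -/
noncomputable def l1 {N : ℕ} (v : Fin N → ℝ) : ℝ := ∑ j, |v j|

/-- The total (unnormalized) exponential loss `∑_{i∈F} exp(−(Mη)ᵢ)` on a set `F` of rows. -/
noncomputable def lossOn {m N : ℕ} (M : Matrix (Fin m) (Fin N) ℝ)
    (F : Finset (Fin m)) (η : Fin N → ℝ) : ℝ :=
  ∑ i ∈ F, Real.exp (-(M.mulVec η i))

/-- `e^x(1-x) ≤ 1` for all `x`. -/
lemma aux_exp_base (x : ℝ) : Real.exp x * (1 - x) ≤ 1 := by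
  have h1 : Real.exp x * Real.exp (-x) = 1 := by rw [← Real.exp_add]; simp
  have h2 : (-x) + 1 ≤ Real.exp (-x) := Real.add_one_le_exp (-x)
  nlinarith [Real.exp_pos x]

/-- `e^x - 1 - x ≤ x²` for `x ≤ 0`. -/
lemma aux_exp_quad (x : ℝ) (hx : x ≤ 0) : Real.exp x - 1 - x ≤ x ^ 2 := by
  have h1 := aux_exp_base x
  have h2 : Real.exp x * ((1 - x) * (1 + x + x^2)) ≤ 1 * (1 + x + x^2) := by
    have hpos : (0:ℝ) ≤ 1 + x + x^2 := by nlinarith [sq_nonneg (1+x), sq_nonneg x]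
    calc Real.exp x * ((1 - x) * (1 + x + x^2)) = (Real.exp x * (1 - x)) * (1 + x + x^2) := by ring
      _ ≤ 1 * (1 + x + x^2) := mul_le_mul_of_nonneg_right h1 hpos
  nlinarith [Real.exp_pos x]

/-- `e^x - 1 ≤ x e^x` for all `x`. -/
lemma aux_exp_lin (x : ℝ) : Real.exp x - 1 ≤ x * Real.exp x := by
  nlinarith [aux_exp_base x]

/-- strong-convexity-type per-term bound. -/
lemma key_lower (a c μ : ℝ) (ha : a ≤ μ) (hc : c ≤ μ) :
    Real.exp (-μ) * (c - a) ^ 2 ≤ (Real.exp (-a) - Real.exp (-c)) * (c - a) := by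
  rcases le_total a c with h | h
  · have h1 : Real.exp (-c) * Real.exp (c - a) = Real.exp (-a) := by
      rw [← Real.exp_add]; ring_nf
    have h2 : (c - a) + 1 ≤ Real.exp (c - a) := Real.add_one_le_exp _
    have h3 : Real.exp (-μ) ≤ Real.exp (-c) := Real.exp_le_exp.2 (by linarith)
    have h4 : Real.exp (-c) * (c - a) ≤ Real.exp (-a) - Real.exp (-c) := by
      nlinarith [mul_le_mul_of_nonneg_left h2 (Real.exp_pos (-c)).le]
    have h5 : Real.exp (-μ) * (c - a) ≤ Real.exp (-c) * (c - a) :=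
      mul_le_mul_of_nonneg_right h3 (by linarith)
    have h6 := mul_le_mul_of_nonneg_right (h5.trans h4) (show (0:ℝ) ≤ c - a by linarith)
    nlinarith [h6]
  · have h1 : Real.exp (-a) * Real.exp (a - c) = Real.exp (-c) := by
      rw [← Real.exp_add]; ring_nf
    have h2 : (a - c) + 1 ≤ Real.exp (a - c) := Real.add_one_le_exp _
    have h3 : Real.exp (-μ) ≤ Real.exp (-a) := Real.exp_le_exp.2 (by linarith)
    have h4 : Real.exp (-a) * (a - c) ≤ Real.exp (-c) - Real.exp (-a) := by
      nlinarith [mul_le_mul_of_nonneg_left h2 (Real.exp_pos (-a)).le]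
    have h5 : Real.exp (-μ) * (a - c) ≤ Real.exp (-a) * (a - c) :=
      mul_le_mul_of_nonneg_right h3 (by linarith)
    have h6 := mul_le_mul_of_nonneg_right (h5.trans h4) (show (0:ℝ) ≤ a - c by linarith)
    nlinarith [h6]

/-- smoothness-type per-term bound. -/
lemma key_upper (a c w : ℝ) (ha : Real.exp (-a) ≤ w) (hc : Real.exp (-c) ≤ w) :
    Real.exp (-a) - Real.exp (-c) - Real.exp (-c) * (c - a) ≤ w * (c - a) ^ 2 := by
  have h1 : Real.exp (-c) * Real.exp (c - a) = Real.exp (-a) := by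
    rw [← Real.exp_add]; ring_nf
  rcases le_total (c - a) 0 with h | h
  · have h2 := aux_exp_quad (c - a) h
    nlinarith [Real.exp_pos (-c)]
  · have h2 : Real.exp (c-a) - 1 - (c-a) ≤ (c-a)^2 * Real.exp (c-a) := by
      nlinarith [aux_exp_lin (c-a), Real.exp_pos (c-a)]
    nlinarith [Real.exp_pos (-c), Real.exp_pos (c-a), sq_nonneg (c-a)]

lemma habs_mulVec {m N : ℕ} (M : Matrix (Fin m) (Fin N) ℝ) (hM : ∀ i j, |M i j| ≤ 1)
    (v : Fin N → ℝ) (i : Fin m) : |M.mulVec v i| ≤ l1 v := by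
  unfold l1
  calc |M.mulVec v i| = |∑ j, M i j * v j| := by simp [Matrix.mulVec, dotProduct]
    _ ≤ ∑ j, |M i j * v j| := Finset.abs_sum_le_sum_abs _ _
    _ ≤ ∑ j, |v j| := Finset.sum_le_sum fun j _ => by
        rw [abs_mul]
        exact mul_le_of_le_one_left (abs_nonneg _) (hM i j)

lemma swap_aux {m N : ℕ} (w : Fin m → ℝ) (M : Matrix (Fin m) (Fin N) ℝ)
    (v : Fin N → ℝ) (s : Finset (Fin m)) :
    ∑ i ∈ s, w i * M.mulVec v i = ∑ j, (∑ i ∈ s, w i * M i j) * v j := by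
  simp only [Matrix.mulVec, dotProduct, Finset.mul_sum]
  rw [Finset.sum_comm]
  exact Finset.sum_congr rfl fun j _ => by
    rw [Finset.sum_mul]
    exact Finset.sum_congr rfl fun i _ => by ring

lemma grad_zero {m N : ℕ} (M : Matrix (Fin m) (Fin N) ℝ) (F : Finset (Fin m))
    (η0 : Fin N → ℝ) (hmin : ∀ η, lossOn M F η0 ≤ lossOn M F η) (j : Fin N) :
    ∑ i ∈ F, Real.exp (-(M.mulVec η0 i)) * M i j = 0 := by
  set φ : ℝ → ℝ := fun t => ∑ i ∈ F, Real.exp (-(M.mulVec η0 i) - t * M i j) with hφ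
  have hder : ∀ t : ℝ, HasDerivAt φ
      (∑ i ∈ F, Real.exp (-(M.mulVec η0 i) - t * M i j) * (-(M i j))) t := by
    intro t
    apply HasDerivAt.fun_sum
    intro i _
    exact (((hasDerivAt_mul_const (M i j)).const_sub (-(M.mulVec η0 i)))).exp
  have hφeq : ∀ t : ℝ, φ t = lossOn M F (η0 + t • (Pi.single j 1 : Fin N → ℝ)) := by
    intro t
    unfold lossOn
    apply Finset.sum_congr rfl
    intro i _
    congr 1
    have hmv : M.mulVec (η0 + t • (Pi.single j 1 : Fin N → ℝ)) i
        = M.mulVec η0 i + t * M i j := by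
      rw [Matrix.mulVec_add, Matrix.mulVec_smul]
      simp [Matrix.mulVec_single, mul_comm]
    rw [hmv]; ring
  have hφmin : IsLocalMin φ 0 := by
    apply Filter.Eventually.of_forall
    intro t
    have he : η0 + (0:ℝ) • (Pi.single j 1 : Fin N → ℝ) = η0 := by simp
    have h0 : φ 0 = lossOn M F η0 := by rw [hφeq 0, he]
    rw [h0, hφeq t]
    exact hmin _
  have hd0 := (hder 0).deriv
  have hz := hφmin.deriv_eq_zero
  rw [hd0] at hz
  have : -∑ i ∈ F, Real.exp (-(M.mulVec η0 i)) * M i j = 0 := by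
    rw [← hz, ← Finset.sum_neg_distrib]
    exact Finset.sum_congr rfl fun i _ => by rw [zero_mul, sub_zero]; ring
  linarith

set_option maxHeartbeats 10000000 in
/-- Let `Z` and `F = Zᶜ` be the zero-loss and finite-margin sets given by
the Decomposition Lemma (whose three items appear here as hypotheses), with `F` nonempty,
and `K` the optimal loss on `F`.  Then there are constants `C₁, C₂ > 0` depending only on
`M` such that whenever the total loss of `λ` is `K + θ` with `0 < θ`, `K + θ ≤ m`, and the
loss on `Z` is less than `C₁·θ`, the maximum coordinate edge `δ` satisfies
`(K+θ)·√(1−δ²) ≤ K + θ − C₂·θ`. -/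
theorem progress_from_finite_margin_set {m N : ℕ}
    (M : Matrix (Fin m) (Fin N) ℝ) (hM : ∀ i j, |M i j| ≤ 1)
    (Z : Finset (Fin m)) (hFne : (Zᶜ : Finset (Fin m)).Nonempty)
    (γ : ℝ) (hγ : 0 < γ) (ηd : Fin N → ℝ) (hηd : l1 ηd = 1)
    (hZ : ∀ i ∈ Z, γ ≤ M.mulVec ηd i) (hFc : ∀ i ∈ Zᶜ, M.mulVec ηd i = 0)
    (ηstar : Fin N → ℝ) (hηstar : lossOn M Zᶜ ηstar = ⨅ η : Fin N → ℝ, lossOn M Zᶜ η)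
    (μmax : ℝ)
    (hμ : ∀ η : Fin N → ℝ, lossOn M Zᶜ η ≤ (m : ℝ) → ∀ i ∈ Zᶜ, M.mulVec η i ≤ μmax)
    (K : ℝ) (hK : K = ⨅ η : Fin N → ℝ, lossOn M Zᶜ η) :
    ∃ C₁ C₂ : ℝ, 0 < C₁ ∧ 0 < C₂ ∧
      ∀ (lam : Fin N → ℝ) (θ : ℝ), 0 < θ →
        lossOn M Finset.univ lam = K + θ → K + θ ≤ (m : ℝ) →
        lossOn M Z lam < C₁ * θ →
        ∀ δ : ℝ,
          ((∃ j : Fin N, δ = |∑ i, Real.exp (-(M.mulVec lam i)) * M i j| /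
              (∑ i, Real.exp (-(M.mulVec lam i)))) ∧
            ∀ j : Fin N, |∑ i, Real.exp (-(M.mulVec lam i)) * M i j| /
              (∑ i, Real.exp (-(M.mulVec lam i))) ≤ δ) →
          (K + θ) * Real.sqrt (1 - δ ^ 2) ≤ K + θ - C₂ * θ := by
  classical
  have hbdd : BddBelow (Set.range (lossOn M Zᶜ)) := by
    refine ⟨0, ?_⟩
    rintro x ⟨η, rfl⟩
    exact Finset.sum_nonneg fun i _ => (Real.exp_pos _).le
  have hmin : ∀ η, lossOn M Zᶜ ηstar ≤ lossOn M Zᶜ η := by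
    intro η; rw [hηstar]; exact ciInf_le hbdd η
  have hKval : lossOn M Zᶜ ηstar = K := by rw [hηstar, hK]
  have hKpos : 0 < K := by
    rw [← hKval]; exact Finset.sum_pos (fun i _ => Real.exp_pos _) hFne
  have hm1 : (1:ℝ) ≤ (m:ℝ) := by
    have h1 : 1 ≤ (Zᶜ : Finset (Fin m)).card := Finset.card_pos.2 hFne
    have h2 : (Zᶜ : Finset (Fin m)).card ≤ m := by
      simpa using Finset.card_le_univ (Zᶜ : Finset (Fin m))
    exact_mod_cast le_trans h1 h2
  have hm0 : (0:ℝ) < (m:ℝ) := by linarith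
  -- the restriction linear map and a bounded right inverse
  set T : (Fin N → ℝ) →ₗ[ℝ] (Fin m → ℝ) :=
    { toFun := fun η i => if i ∈ (Zᶜ : Finset (Fin m)) then M.mulVec η i else 0
      map_add' := by
        intro x y
        funext i
        simp only [Pi.add_apply]
        by_cases h : i ∈ (Zᶜ : Finset (Fin m))
        · rw [if_pos h, if_pos h, if_pos h, Matrix.mulVec_add, Pi.add_apply]
        · rw [if_neg h, if_neg h, if_neg h, add_zero]
      map_smul' := by
        intro t x
        funext i
        simp only [Pi.smul_apply, RingHom.id_apply, smul_eq_mul]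
        by_cases h : i ∈ (Zᶜ : Finset (Fin m))
        · rw [if_pos h, if_pos h, Matrix.mulVec_smul, Pi.smul_apply, smul_eq_mul]
        · rw [if_neg h, if_neg h, mul_zero] }
    with hTdef
  obtain ⟨g, hg⟩ := LinearMap.exists_rightInverse_of_surjective
    T.rangeRestrict (LinearMap.range_rangeRestrict T)
  set G := LinearMap.toContinuousLinearMap g with hGdef
  set c₀ : ℝ := ‖G‖ with hc₀def
  have hc₀0 : 0 ≤ c₀ := by rw [hc₀def]; exact norm_nonneg G
  set c₁ : ℝ := N * c₀ + 1 with hc₁def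
  have hc₁ : 0 < c₁ := by
    rw [hc₁def]
    nlinarith only [hc₀0, Nat.cast_nonneg (α := ℝ) N]
  set E : ℝ := Real.exp (-μmax) with hEdef
  have hE0 : 0 < E := Real.exp_pos _
  have hden4 : (0:ℝ) < 4 * c₁ * (m:ℝ) := by nlinarith only [hm0, hc₁]
  have hden : (0:ℝ) < 8 * (m:ℝ)^2 * c₁^2 := by
    nlinarith only [pow_pos hm0 2, pow_pos hc₁ 2]
  refine ⟨min (1/2) (E / (4 * c₁ * (m:ℝ))), min (E^2 / (8 * (m:ℝ)^2 * c₁^2)) 1 / 2,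
    lt_min (by norm_num) (div_pos hE0 hden4), ?_, ?_⟩
  · have h1 : 0 < E^2 / (8 * (m:ℝ)^2 * c₁^2) := div_pos (pow_pos hE0 2) hden
    have h2 := lt_min h1 one_pos
    linarith
  intro lam θ hθ htot hle hZloss δ hδ
  set C₁ : ℝ := min (1/2) (E / (4 * c₁ * (m:ℝ))) with hC₁def
  set C₂ : ℝ := min (E^2 / (8 * (m:ℝ)^2 * c₁^2)) 1 / 2 with hC₂def
  have hC₁0 : 0 < C₁ := by
    rw [hC₁def]
    exact lt_min (by norm_num) (div_pos hE0 hden4)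
  have hW : (0:ℝ) < K + θ := by linarith
  -- splitting total loss
  have hsplit : lossOn M Z lam + lossOn M Zᶜ lam = lossOn M Finset.univ lam :=
    Finset.sum_add_sum_compl Z _
  have hZnn : 0 ≤ lossOn M Z lam :=
    Finset.sum_nonneg fun i _ => (Real.exp_pos _).le
  have hLF : lossOn M Zᶜ lam = K + θ - lossOn M Z lam := by
    rw [← htot, ← hsplit]; ring
  have hLFm : lossOn M Zᶜ lam ≤ (m:ℝ) := by rw [hLF]; linarith
  have hKm : K ≤ (m:ℝ) := by linarith
  have hma : ∀ i ∈ (Zᶜ : Finset (Fin m)), M.mulVec lam i ≤ μmax := hμ lam hLFm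
  have hmc : ∀ i ∈ (Zᶜ : Finset (Fin m)), M.mulVec ηstar i ≤ μmax :=
    hμ ηstar (by rw [hKval]; exact hKm)
  have hwa : ∀ i ∈ (Zᶜ : Finset (Fin m)), Real.exp (-(M.mulVec lam i)) ≤ (m:ℝ) := by
    intro i hi
    have h1 : Real.exp (-(M.mulVec lam i)) ≤ lossOn M Zᶜ lam :=
      Finset.single_le_sum (fun k _ => (Real.exp_pos (-(M.mulVec lam k))).le) hi
    linarith
  have hwc : ∀ i ∈ (Zᶜ : Finset (Fin m)), Real.exp (-(M.mulVec ηstar i)) ≤ (m:ℝ) := by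
    intro i hi
    have h1 : Real.exp (-(M.mulVec ηstar i)) ≤ lossOn M Zᶜ ηstar :=
      Finset.single_le_sum (fun k _ => (Real.exp_pos (-(M.mulVec ηstar k))).le) hi
    rw [hKval] at h1; linarith
  -- the corrective direction η
  set x : ↥(LinearMap.range T) := ⟨T (ηstar - lam), LinearMap.mem_range_self _ _⟩ with hxdef
  set η : Fin N → ℝ := g x with hηdef
  have hTη : T η = T (ηstar - lam) := by
    have h1 : T.rangeRestrict (g x) = x := by
      rw [← LinearMap.comp_apply, hg]; rfl
    have h2 := congrArg Subtype.val h1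
    simpa [hηdef, hxdef] using h2
  have hηF : ∀ i ∈ (Zᶜ : Finset (Fin m)),
      M.mulVec η i = M.mulVec ηstar i - M.mulVec lam i := by
    intro i hi
    have h1 := congrFun hTη i
    rw [hTdef] at h1
    simp only [LinearMap.coe_mk, AddHom.coe_mk, if_pos hi] at h1
    rw [h1, Matrix.mulVec_sub]
    rfl
  set S : ℝ := ∑ i ∈ (Zᶜ : Finset (Fin m)), (M.mulVec ηstar i - M.mulVec lam i)^2 with hSdef
  have hSnn : 0 ≤ S := Finset.sum_nonneg fun i _ => sq_nonneg _
  set Q : ℝ := Real.sqrt S with hQdef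
  have hQnn : 0 ≤ Q := by rw [hQdef]; exact Real.sqrt_nonneg S
  -- ℓ₁ norm of the direction
  have hxval : (x : Fin m → ℝ) = T (ηstar - lam) := rfl
  have hxle : ‖x‖ ≤ Q := by
    have h1 : ∀ i, ‖(x : Fin m → ℝ) i‖ ≤ Real.sqrt S := by
      intro i
      rw [hxval, hTdef]
      simp only [LinearMap.coe_mk, AddHom.coe_mk]
      by_cases h : i ∈ (Zᶜ : Finset (Fin m))
      · rw [if_pos h, Real.norm_eq_abs]
        have h2 : (M.mulVec (ηstar - lam) i)^2 ≤ S := by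
          have h3 : M.mulVec (ηstar - lam) i = M.mulVec ηstar i - M.mulVec lam i := by
            rw [Matrix.mulVec_sub]; rfl
          rw [h3, hSdef]
          exact Finset.single_le_sum
            (f := fun k => (M.mulVec ηstar k - M.mulVec lam k)^2)
            (fun k _ => sq_nonneg _) h
        exact Real.abs_le_sqrt h2
      · rw [if_neg h]
        simpa using Real.sqrt_nonneg S
    rw [hQdef]
    calc ‖x‖ = ‖(x : Fin m → ℝ)‖ := rfl
      _ ≤ Real.sqrt S := (pi_norm_le_iff_of_nonneg (Real.sqrt_nonneg S)).2 h1
  have hGx : G x = η := rfl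
  have hηnorm : ‖η‖ ≤ c₀ * Q := by
    rw [← hGx]
    calc ‖G x‖ ≤ ‖G‖ * ‖x‖ := G.le_opNorm x
      _ ≤ c₀ * Q := by
          rw [← hc₀def]
          exact mul_le_mul_of_nonneg_left hxle hc₀0
  have hl1nn : 0 ≤ l1 η := Finset.sum_nonneg fun j _ => abs_nonneg _
  have hl1 : l1 η ≤ c₁ * Q := by
    have h1 : l1 η ≤ (N:ℝ) * ‖η‖ := by
      unfold l1
      calc ∑ j, |η j| ≤ ∑ _j : Fin N, ‖η‖ := Finset.sum_le_sum fun j _ => by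
            rw [← Real.norm_eq_abs]; exact norm_le_pi_norm η j
        _ = (N:ℝ) * ‖η‖ := by
            rw [Finset.sum_const, Finset.card_fin, nsmul_eq_mul]
    have h2 : (N:ℝ) * ‖η‖ ≤ (N:ℝ) * (c₀ * Q) :=
      mul_le_mul_of_nonneg_left hηnorm (Nat.cast_nonneg N)
    have h3 : (N:ℝ) * (c₀ * Q) ≤ c₁ * Q := by
      rw [hc₁def]
      nlinarith only [hQnn, hc₀0, Nat.cast_nonneg (α := ℝ) N]
    linarith
  -- gradient of the optimal point vanishes
  have hgrad : ∀ j, ∑ i ∈ (Zᶜ : Finset (Fin m)),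
      Real.exp (-(M.mulVec ηstar i)) * M i j = 0 := grad_zero M Zᶜ ηstar hmin
  have hS0 : ∑ i ∈ (Zᶜ : Finset (Fin m)), Real.exp (-(M.mulVec ηstar i)) *
      (M.mulVec ηstar i - M.mulVec lam i) = 0 := by
    have h1 : ∑ i ∈ (Zᶜ : Finset (Fin m)), Real.exp (-(M.mulVec ηstar i)) *
        (M.mulVec ηstar i - M.mulVec lam i)
        = ∑ i ∈ (Zᶜ : Finset (Fin m)), Real.exp (-(M.mulVec ηstar i)) * M.mulVec η i :=
      Finset.sum_congr rfl fun i hi => by rw [hηF i hi]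
    rw [h1, swap_aux]
    apply Finset.sum_eq_zero
    intro j _
    rw [hgrad j, zero_mul]
  -- gap upper bound
  have hgap : lossOn M Zᶜ lam - K ≤ (m:ℝ) * S := by
    have h1 : lossOn M Zᶜ lam - K
        = ∑ i ∈ (Zᶜ : Finset (Fin m)),
            (Real.exp (-(M.mulVec lam i)) - Real.exp (-(M.mulVec ηstar i))
              - Real.exp (-(M.mulVec ηstar i)) * (M.mulVec ηstar i - M.mulVec lam i)) := by
      rw [Finset.sum_sub_distrib, Finset.sum_sub_distrib, hS0, sub_zero, ← hKval]
      rfl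
    rw [h1, hSdef, Finset.mul_sum]
    exact Finset.sum_le_sum fun i hi =>
      key_upper (M.mulVec lam i) (M.mulVec ηstar i) (m:ℝ) (hwa i hi) (hwc i hi)
  -- gradient lower bound
  have hg0 : E * S ≤ ∑ i ∈ (Zᶜ : Finset (Fin m)), Real.exp (-(M.mulVec lam i)) *
      (M.mulVec ηstar i - M.mulVec lam i) := by
    have h2 : ∑ i ∈ (Zᶜ : Finset (Fin m)),
        (Real.exp (-(M.mulVec lam i)) - Real.exp (-(M.mulVec ηstar i))) *
          (M.mulVec ηstar i - M.mulVec lam i)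
        = (∑ i ∈ (Zᶜ : Finset (Fin m)), Real.exp (-(M.mulVec lam i)) *
            (M.mulVec ηstar i - M.mulVec lam i))
          - ∑ i ∈ (Zᶜ : Finset (Fin m)), Real.exp (-(M.mulVec ηstar i)) *
            (M.mulVec ηstar i - M.mulVec lam i) := by
      rw [← Finset.sum_sub_distrib]
      exact Finset.sum_congr rfl fun i _ => by ring
    have h3 : E * S ≤ ∑ i ∈ (Zᶜ : Finset (Fin m)),
        (Real.exp (-(M.mulVec lam i)) - Real.exp (-(M.mulVec ηstar i))) *
          (M.mulVec ηstar i - M.mulVec lam i) := by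
      rw [hSdef, Finset.mul_sum]
      refine Finset.sum_le_sum fun i hi => ?_
      rw [hEdef]
      exact key_lower (M.mulVec lam i) (M.mulVec ηstar i) μmax (hma i hi) (hmc i hi)
    rw [h2, hS0, sub_zero] at h3
    exact h3
  clear_value T G c₀ c₁ x η S Q E C₁ C₂
  clear hg hTdef hGdef hxdef hηdef hTη hxval hGx hc₀def
  -- basic consequences
  have hC₁half : C₁ ≤ 1/2 := by rw [hC₁def]; exact min_le_left _ _
  have hZhalf : lossOn M Z lam < θ/2 :=
    lt_of_lt_of_le hZloss (by nlinarith only [hC₁half, hC₁0, hθ])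
  have hθS : θ ≤ 2*(m:ℝ)*S := by
    rw [hLF] at hgap; linarith only [hgap, hZhalf, hZnn]
  have hSpos : 0 < S := by nlinarith only [hθS, hθ, hm0, hSnn]
  have hQpos : 0 < Q := by rw [hQdef]; exact Real.sqrt_pos.2 hSpos
  have hQS : Q^2 = S := by rw [hQdef]; exact Real.sq_sqrt hSnn
  have hθm : θ ≤ (m:ℝ) := by linarith
  have hθQ : θ ≤ 2*(m:ℝ)*Q := by
    have h1 : (θ/(2*(m:ℝ)))^2 ≤ S := by
      have e1 : θ*θ ≤ (2*(m:ℝ)*S)*θ := mul_le_mul_of_nonneg_right hθS hθ.le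
      have e2 : (2*(m:ℝ)*S)*θ ≤ (2*(m:ℝ)*S)*(m:ℝ) :=
        mul_le_mul_of_nonneg_left hθm (by nlinarith only [hm0, hSnn])
      rw [div_pow, div_le_iff₀ (by nlinarith only [hm0])]
      nlinarith only [e1, e2, mul_nonneg (mul_nonneg hm0.le hm0.le) hSnn]
    have h2 : θ/(2*(m:ℝ)) ≤ Q := by
      rw [hQdef]
      exact (Real.le_sqrt (div_nonneg hθ.le (by linarith only [hm0])) hSnn).2 h1
    rw [div_le_iff₀ (by linarith only [hm0])] at h2
    linarith only [h2]
  -- the edge bound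
  have hWsum : (∑ i, Real.exp (-(M.mulVec lam i))) = K + θ := htot
  have hδ0 : 0 ≤ δ := by
    obtain ⟨j0, hj0⟩ := hδ.1
    rw [hj0, hWsum]
    exact div_nonneg (abs_nonneg _) hW.le
  have hedge : ∀ j, |∑ i, Real.exp (-(M.mulVec lam i)) * M i j| ≤ δ * (K + θ) := by
    intro j
    have h1 := hδ.2 j
    rw [hWsum, div_le_iff₀ hW] at h1
    linarith
  have hA : |∑ i, Real.exp (-(M.mulVec lam i)) * M.mulVec η i| ≤ δ * (K + θ) * l1 η := by
    rw [show (∑ i, Real.exp (-(M.mulVec lam i)) * M.mulVec η i)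
        = ∑ i ∈ Finset.univ, Real.exp (-(M.mulVec lam i)) * M.mulVec η i from rfl,
      swap_aux]
    calc |∑ j, (∑ i ∈ Finset.univ, Real.exp (-(M.mulVec lam i)) * M i j) * η j|
        ≤ ∑ j, |(∑ i ∈ Finset.univ, Real.exp (-(M.mulVec lam i)) * M i j) * η j| :=
          Finset.abs_sum_le_sum_abs _ _
      _ ≤ ∑ j, δ * (K + θ) * |η j| := Finset.sum_le_sum fun j _ => by
          rw [abs_mul]
          exact mul_le_mul_of_nonneg_right (hedge j) (abs_nonneg _)
      _ = δ * (K + θ) * l1 η := by rw [← Finset.mul_sum]; rfl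
  -- lower bound for the directional sum
  have hAlow : E * S - lossOn M Z lam * l1 η
      ≤ ∑ i, Real.exp (-(M.mulVec lam i)) * M.mulVec η i := by
    have h1 : (∑ i ∈ Z, Real.exp (-(M.mulVec lam i)) * M.mulVec η i)
        + ∑ i ∈ (Zᶜ : Finset (Fin m)), Real.exp (-(M.mulVec lam i)) * M.mulVec η i
        = ∑ i, Real.exp (-(M.mulVec lam i)) * M.mulVec η i :=
      Finset.sum_add_sum_compl Z _
    have h2 : ∑ i ∈ (Zᶜ : Finset (Fin m)), Real.exp (-(M.mulVec lam i)) * M.mulVec η i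
        = ∑ i ∈ (Zᶜ : Finset (Fin m)), Real.exp (-(M.mulVec lam i)) *
            (M.mulVec ηstar i - M.mulVec lam i) :=
      Finset.sum_congr rfl fun i hi => by rw [hηF i hi]
    have h3 : -(lossOn M Z lam * l1 η)
        ≤ ∑ i ∈ Z, Real.exp (-(M.mulVec lam i)) * M.mulVec η i := by
      have h4 : lossOn M Z lam * l1 η
          = ∑ i ∈ Z, Real.exp (-(M.mulVec lam i)) * l1 η := by
        rw [lossOn, Finset.sum_mul]
      rw [h4, ← Finset.sum_neg_distrib]
      refine Finset.sum_le_sum fun i _ => ?_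
      have h5 := habs_mulVec M hM η i
      have h6 := abs_le.1 h5
      nlinarith only [h6.1, h6.2, Real.exp_pos (-(M.mulVec lam i))]
    rw [← h1, h2]
    have := hg0
    linarith
  -- combine
  have hchain : E * S ≤ δ * (K + θ) * (c₁ * Q) + lossOn M Z lam * l1 η := by
    have h1 : ∑ i, Real.exp (-(M.mulVec lam i)) * M.mulVec η i
        ≤ δ * (K + θ) * l1 η :=
      le_trans (le_abs_self _) hA
    have h2 : δ * (K + θ) * l1 η ≤ δ * (K + θ) * (c₁ * Q) :=
      mul_le_mul_of_nonneg_left hl1 (mul_nonneg hδ0 hW.le)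
    linarith only [h1, h2, hAlow]
  have hZl1 : lossOn M Z lam * l1 η ≤ C₁ * θ * (c₁ * Q) := by
    have h1 : lossOn M Z lam * l1 η ≤ (C₁ * θ) * l1 η :=
      mul_le_mul_of_nonneg_right hZloss.le hl1nn
    have h2 : (C₁ * θ) * l1 η ≤ (C₁ * θ) * (c₁ * Q) :=
      mul_le_mul_of_nonneg_left hl1 (mul_nonneg hC₁0.le hθ.le)
    linarith only [h1, h2]
  have h4m : C₁ * (4 * c₁ * (m:ℝ)) ≤ E := by
    have h1 : C₁ ≤ E / (4 * c₁ * (m:ℝ)) := by rw [hC₁def]; exact min_le_right _ _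
    rw [le_div_iff₀ hden4] at h1
    exact h1
  have hQQ : Q * Q = S := by rw [← hQS]; ring
  have hhalf : C₁ * θ * (c₁ * Q) ≤ E * S / 2 := by
    have e1 : C₁ * θ * (c₁ * Q) ≤ C₁ * (2*(m:ℝ)*Q) * (c₁ * Q) := by
      have h0 := mul_le_mul_of_nonneg_right (mul_le_mul_of_nonneg_left hθQ hC₁0.le)
        (mul_nonneg hc₁.le hQnn)
      linarith only [h0]
    have e3 : (C₁ * (4 * c₁ * (m:ℝ))) * (Q*Q) / 2 ≤ E * (Q*Q) / 2 := by
      nlinarith only [mul_le_mul_of_nonneg_right h4m (mul_self_nonneg Q)]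
    have e4 : E * (Q*Q) / 2 = E * S / 2 := by rw [hQQ]
    nlinarith only [e1, e3, e4]
  have hES2 : E * S / 2 ≤ δ * (K + θ) * (c₁ * Q) := by
    linarith only [hchain, hZl1, hhalf]
  have hEQ : E * Q ≤ 2 * c₁ * δ * (K + θ) := by
    have h : (E*Q)*Q ≤ (2*c₁*δ*(K+θ))*Q := by
      have e5 : (E*Q)*Q = E*S := by rw [← hQQ]; ring
      nlinarith only [hES2, e5]
    exact le_of_mul_le_mul_right h hQpos
  have hE2 : E^2 * S ≤ 4*c₁^2*δ^2*(K+θ)^2 := by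
    have e6 : E^2 * S = (E*Q)*(E*Q) := by rw [← hQS]; ring
    nlinarith only [mul_self_le_mul_self (mul_nonneg hE0.le hQnn) hEQ, e6]
  have i1 : E^2*θ ≤ E^2*(2*(m:ℝ)*S) := mul_le_mul_of_nonneg_left hθS (sq_nonneg E)
  have i3 : (K+θ)^2 ≤ (K+θ)*(m:ℝ) := by nlinarith only [hW, hle]
  have i4 : 2*(m:ℝ)*(E^2*S) ≤ 2*(m:ℝ)*(4*c₁^2*δ^2*(K+θ)^2) :=
    mul_le_mul_of_nonneg_left hE2 (by linarith only [hm0])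
  have i5 : 4*c₁^2*δ^2*(K+θ)^2 ≤ 4*c₁^2*δ^2*((K+θ)*(m:ℝ)) :=
    mul_le_mul_of_nonneg_left i3 (by positivity)
  have i6 : 2*(m:ℝ)*(4*c₁^2*δ^2*(K+θ)^2) ≤ 2*(m:ℝ)*(4*c₁^2*δ^2*((K+θ)*(m:ℝ))) :=
    mul_le_mul_of_nonneg_left i5 (by linarith only [hm0])
  have h1 : E^2*θ ≤ 8*(m:ℝ)^2*c₁^2*(δ^2*(K+θ)) := by nlinarith only [i1, i4, i6]
  have hfin : E^2/(8*(m:ℝ)^2*c₁^2)*θ ≤ δ^2*(K+θ) := by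
    rw [div_mul_eq_mul_div, div_le_iff₀ hden]
    nlinarith only [h1]
  have hC₂0 : 0 < C₂ := by
    rw [hC₂def]
    have h2 : 0 < E^2/(8*(m:ℝ)^2*c₁^2) := div_pos (pow_pos hE0 2) hden
    have h3 := lt_min h2 one_pos
    linarith
  have h2C : 2*C₂ ≤ E^2/(8*(m:ℝ)^2*c₁^2) := by
    have h2 := min_le_left (E^2/(8*(m:ℝ)^2*c₁^2)) 1
    rw [hC₂def]
    linarith
  have hC₂half : C₂ ≤ 1/2 := by
    have h2 := min_le_right (E^2/(8*(m:ℝ)^2*c₁^2)) 1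
    rw [hC₂def]
    linarith
  have h2Cθ : 2*C₂*θ ≤ δ^2*(K+θ) := by nlinarith only [hfin, h2C, hθ.le]
  have hWc : 0 ≤ K + θ - C₂*θ := by nlinarith only [hC₂half, hθ.le, hKpos]
  have hsq : (K+θ)^2*(1-δ^2) ≤ (K+θ-C₂*θ)^2 := by
    nlinarith only [mul_le_mul_of_nonneg_left h2Cθ hW.le, sq_nonneg (C₂*θ)]
  calc (K+θ) * Real.sqrt (1-δ^2) = Real.sqrt ((K+θ)^2*(1-δ^2)) := by
        rw [Real.sqrt_mul (sq_nonneg _), Real.sqrt_sq hW.le]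
      _ ≤ Real.sqrt ((K+θ-C₂*θ)^2) := Real.sqrt_le_sqrt hsq
      _ = K + θ - C₂*θ := Real.sqrt_sq hWc
end

section
/- Let M be an m×N real matrix with entries in [−1,1], let Z ⊆ {1,…,m}, and let η₍₁₎, η₍₂₎, … be a sequence of vectors in ℝ^N with ∑_{i=1}^m exp(−(Mη₍t₎)_i) ≤ m for all t, such that for every i ∈ Z, exp(−(Mη₍t₎)_i) → 0 as t → ∞, and for every i ∉ Z, inf_t exp(−(Mη₍t₎)_i) > 0. Then there exists η† ∈ ℝ^N such that (Mη†)_i > 0 for every i ∈ Z and (Mη†)_i = 0 for every i ∉ Z. -/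
set_option maxHeartbeats 1000000

open Filter Real


/-- If a sequence of admissible combinations has zero-loss set `Z` (losses
tending to `0` on `Z`, bounded away from `0` off `Z`), then some single combination `η†`
achieves strictly positive margin on every example of `Z` and zero margin off `Z`. -/
theorem positive_margin_vector_from_zero_loss_set {m N : ℕ}
    (M : Matrix (Fin m) (Fin N) ℝ) (hM : ∀ i j, |M i j| ≤ 1)
    (Z : Finset (Fin m)) (η : ℕ → Fin N → ℝ)
    (hadm : ∀ t : ℕ, (∑ i, Real.exp (-(M.mulVec (η t) i))) ≤ (m : ℝ))
    (hZ : ∀ i ∈ Z, Filter.Tendsto (fun t : ℕ => Real.exp (-(M.mulVec (η t) i)))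
      Filter.atTop (nhds 0))
    (hZc : ∀ i ∉ Z, 0 < ⨅ t : ℕ, Real.exp (-(M.mulVec (η t) i))) :
    ∃ ηd : Fin N → ℝ,
      (∀ i ∈ Z, 0 < M.mulVec ηd i) ∧ (∀ i ∉ Z, M.mulVec ηd i = 0) := by
  classical
  rcases Z.eq_empty_or_nonempty with rfl | ⟨i0, hi0⟩
  · exact ⟨0, by simp, fun i _ => by simp [Matrix.mulVec_zero]⟩
  have hm : 1 ≤ m := Nat.one_le_iff_ne_zero.mpr (by rintro rfl; exact i0.elim0)
  have hm' : (1 : ℝ) ≤ (m : ℝ) := by exact_mod_cast hm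
  set V : Submodule ℝ (Fin m → ℝ) := LinearMap.range M.mulVecLin with hV
  let pr : (Fin m → ℝ) →ₗ[ℝ] (Fin m → ℝ) :=
    LinearMap.pi (fun i => if i ∈ Z then 0 else LinearMap.proj i)
  have hpr : ∀ (x : Fin m → ℝ) i, pr x i = if i ∈ Z then 0 else x i := by
    intro x i
    simp only [pr, LinearMap.pi_apply]
    split <;> simp_all
  let L : V →ₗ[ℝ] (Fin m → ℝ) := pr ∘ₗ V.subtype
  obtain ⟨s, hs⟩ := L.rangeRestrict.exists_rightInverse_of_surjective
    L.range_rangeRestrict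
  let v : ℕ → V := fun t => ⟨M.mulVec (η t), ⟨η t, M.mulVecLin_apply _⟩⟩
  let u : ℕ → V := fun t => s (L.rangeRestrict (v t))
  have hLu : ∀ t, L (u t) = L (v t) := by
    intro t
    have h1 := LinearMap.congr_fun hs (L.rangeRestrict (v t))
    have h2 := congrArg Subtype.val h1
    simpa using h2
  -- bounds off Z
  set c : Fin m → ℝ := fun i => ⨅ t, Real.exp (-(M.mulVec (η t) i)) with hc
  set B : Fin m → ℝ := fun i => if i ∈ Z then 0 else
    max (Real.log m) (-Real.log (c i)) with hB
  have hBnn : ∀ i, 0 ≤ B i := by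
    intro i
    simp only [hB]
    split
    · exact le_rfl
    · exact le_max_of_le_left (Real.log_nonneg hm')
  set C : ℝ := ∑ i, B i with hCdef
  have hCnn : 0 ≤ C := Finset.sum_nonneg fun i _ => hBnn i
  have hBC : ∀ i, B i ≤ C := fun i =>
    Finset.single_le_sum (fun j _ => hBnn j) (Finset.mem_univ i)
  have hbound : ∀ t, ‖L (v t)‖ ≤ C := by
    intro t
    rw [pi_norm_le_iff_of_nonneg hCnn]
    intro i
    rw [show (L (v t) : Fin m → ℝ) i = pr (M.mulVec (η t)) i from rfl, hpr]
    split
    · simpa using hCnn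
    · rename_i hiZ
      refine le_trans ?_ (hBC i)
      simp only [hB]
      rw [if_neg hiZ]
      rw [Real.norm_eq_abs, abs_le]
      constructor
      · -- -(max ...) ≤ x, since x ≥ -log m
        have hle : Real.exp (-(M.mulVec (η t) i)) ≤ (m : ℝ) := by
          refine le_trans ?_ (hadm t)
          exact Finset.single_le_sum (f := fun j => Real.exp (-(M.mulVec (η t) j)))
            (fun j _ => (Real.exp_pos _).le) (Finset.mem_univ i)
        have : -(M.mulVec (η t) i) ≤ Real.log m :=
          (Real.le_log_iff_exp_le (by linarith : (0:ℝ) < m)).mpr hle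
        have h2 : -max (Real.log m) (-Real.log (c i)) ≤ -(Real.log m) := by
          simp [le_max_left]
        linarith
      · -- x ≤ -log (c i)
        have hci : 0 < c i := hZc i hiZ
        have hcle : c i ≤ Real.exp (-(M.mulVec (η t) i)) := by
          refine ciInf_le ⟨0, ?_⟩ t
          rintro y ⟨t', rfl⟩
          exact (Real.exp_pos _).le
        have := Real.log_le_log hci hcle
        rw [Real.log_exp] at this
        have h3 : M.mulVec (η t) i ≤ -Real.log (c i) := by linarith
        exact le_trans h3 (le_max_right _ _)
  -- coordinates of u are bounded
  have hub : ∀ i, ∃ D : ℝ, ∀ t, |(u t : Fin m → ℝ) i| ≤ D := by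
    intro i
    let g : LinearMap.range L →ₗ[ℝ] ℝ := (LinearMap.proj i) ∘ₗ V.subtype ∘ₗ s
    let g' := LinearMap.toContinuousLinearMap g
    refine ⟨‖g'‖ * C, fun t => ?_⟩
    have h1 : (u t : Fin m → ℝ) i = g' (L.rangeRestrict (v t)) := rfl
    rw [h1]
    calc |g' (L.rangeRestrict (v t))| ≤ ‖g'‖ * ‖L.rangeRestrict (v t)‖ :=
          g'.le_opNorm _
      _ ≤ ‖g'‖ * C := by
          refine mul_le_mul_of_nonneg_left ?_ (ContinuousLinearMap.opNorm_nonneg _)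
          have : ‖L.rangeRestrict (v t)‖ = ‖L (v t)‖ := rfl
          rw [this]; exact hbound t
  -- tendsto atTop on Z
  have hvT : ∀ i ∈ Z, Tendsto (fun t => (v t : Fin m → ℝ) i) atTop atTop := by
    intro i hi
    have := (Real.tendsto_exp_comp_nhds_zero (f := fun t : ℕ => -(M.mulVec (η t) i))).mp (hZ i hi)
    exact tendsto_neg_atBot_iff.mp this
  -- eventually positive
  have hev : ∀ᶠ t in atTop, ∀ i ∈ Z, 0 < (v t : Fin m → ℝ) i - (u t : Fin m → ℝ) i := by
    rw [Filter.eventually_all_finset]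
    intro i hi
    obtain ⟨D, hD⟩ := hub i
    filter_upwards [(hvT i hi).eventually_gt_atTop D] with t ht
    have := hD t
    have : (u t : Fin m → ℝ) i ≤ D := le_trans (le_abs_self _) this
    linarith
  obtain ⟨t, ht⟩ := hev.exists
  set w : V := v t - u t with hw
  obtain ⟨ηd, hηd⟩ := w.2
  refine ⟨ηd, ?_, ?_⟩
  · intro i hi
    have : M.mulVec ηd i = (w : Fin m → ℝ) i := by
      rw [← M.mulVecLin_apply, hηd]
    rw [this, hw]
    simpa using ht i hi
  · intro i hi
    have h0 : L w = 0 := by rw [hw, map_sub, hLu, sub_self]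
    have : pr (w : Fin m → ℝ) i = 0 := by
      rw [show pr (w : Fin m → ℝ) = L w from rfl, h0]; rfl
    rw [hpr, if_neg hi] at this
    have h2 : M.mulVec ηd i = (w : Fin m → ℝ) i := by
      rw [← M.mulVecLin_apply, hηd]
    rw [h2, this]
end

section
/- Let M be the 3×2 feature matrix with rows (+1, −1), (−1, +1), (+1, +1), for which inf_λ L(λ) = 2/3. Then every run of AdaBoost on M satisfies L(λ^T) ≥ 2/3 + 2/(9T) for every integer T ≥ 1; consequently, for any ε with 0 < ε < 1/3, at least 2/(9ε) rounds are required to achieve L(λ^T) ≤ 2/3 + ε. -/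
/-- The exponential loss `L(λ) = (1/m) ∑ᵢ exp(−(Mλ)ᵢ)`. -/
noncomputable def expLoss {m N : ℕ} (M : Matrix (Fin m) (Fin N) ℝ) (lam : Fin N → ℝ) : ℝ :=
  (1 / (m : ℝ)) * ∑ i, Real.exp (-(M.mulVec lam i))

/-- AdaBoost's distribution `D(i) ∝ exp(−(Mλ)ᵢ)`. -/
noncomputable def wt {m N : ℕ} (M : Matrix (Fin m) (Fin N) ℝ) (lam : Fin N → ℝ) (i : Fin m) : ℝ :=
  Real.exp (-(M.mulVec lam i)) / ∑ i', Real.exp (-(M.mulVec lam i'))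

/-- `lam`, `j`, `r` describe a run of AdaBoost on feature matrix `M`:
`lam 0 = 0`, and at each round the coordinate `j t` of maximal absolute correlation is
chosen, `r t` is its correlation, and the step is `α_t = ½ ln((1+r_t)/(1−r_t))`. -/
def IsAdaBoost {m N : ℕ} (M : Matrix (Fin m) (Fin N) ℝ)
    (lam : ℕ → Fin N → ℝ) (j : ℕ → Fin N) (r : ℕ → ℝ) : Prop :=
  lam 0 = 0 ∧
  ∀ t : ℕ,
    (∀ j' : Fin N, |∑ i, wt M (lam t) i * M i j'| ≤ |∑ i, wt M (lam t) i * M i (j t)|) ∧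
    r t = ∑ i, wt M (lam t) i * M i (j t) ∧
    lam (t + 1) = lam t + Pi.single (j t) ((1 / 2) * Real.log ((1 + r t) / (1 - r t)))


/-- The 3×2 feature matrix with rows `(+1,−1)`, `(−1,+1)`, `(+1,+1)`. -/
noncomputable def M3 : Matrix (Fin 3) (Fin 2) ℝ := !![1, -1; -1, 1; 1, 1]



lemma sq_eq_of_nonneg' {a b : ℝ} (ha : 0 ≤ a) (hb : 0 ≤ b) (h : a^2 = b^2) : a = b := by
  nlinarith [sq_nonneg (a - b), sq_nonneg (a + b)]

noncomputable def ww (t : ℕ) : ℝ := Real.sqrt (1 / (t * (t + 1)))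

lemma ww_nonneg (t : ℕ) : 0 ≤ ww t := Real.sqrt_nonneg _

lemma ww_pos {t : ℕ} (ht : 1 ≤ t) : 0 < ww t := by
  have : (1:ℝ) ≤ (t:ℝ) := by exact_mod_cast ht
  unfold ww; positivity

lemma ww_sq {t : ℕ} (ht : 1 ≤ t) : (ww t)^2 = 1 / (t * (t+1)) := by
  have : (1:ℝ) ≤ (t:ℝ) := by exact_mod_cast ht
  rw [ww, Real.sq_sqrt (by positivity)]

lemma exp_half_log {x : ℝ} (hx : 0 < x) :
    Real.exp ((1/2 : ℝ) * Real.log x) = Real.sqrt x := by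
  rw [mul_comm, ← div_eq_mul_one_div, ← Real.log_sqrt hx.le,
    Real.exp_log (Real.sqrt_pos.mpr hx)]

section step
variable {t : ℕ}

lemma ht' (ht : 1 ≤ t) : (1:ℝ) ≤ (t:ℝ) := by exact_mod_cast ht

lemma sqk_sq (ht : 1 ≤ t) : (Real.sqrt (((t:ℝ)+2)/t))^2 = ((t:ℝ)+2)/t := by
  have := ht' ht; rw [Real.sq_sqrt (by positivity)]

lemma sqk'_sq (ht : 1 ≤ t) : (Real.sqrt ((t:ℝ)/(t+2)))^2 = (t:ℝ)/(t+2) := by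
  have := ht' ht; rw [Real.sq_sqrt (by positivity)]

lemma step0 (ht : 1 ≤ t) :
    (t:ℝ) * ww t * Real.sqrt (((t:ℝ)+2)/t) = ((t:ℝ)+2) * ww (t+1) := by
  have h1 := ht' ht
  apply sq_eq_of_nonneg'
    (mul_nonneg (mul_nonneg (by positivity) (ww_nonneg t)) (Real.sqrt_nonneg _))
    (mul_nonneg (by positivity) (ww_nonneg _))
  simp only [mul_pow]
  rw [sqk_sq ht, ww_sq ht, ww_sq (show 1 ≤ t+1 by omega)]
  push_cast
  field_simp
  ring

lemma step1 (ht : 1 ≤ t) :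
    ((t:ℝ)+1) * ww t * Real.sqrt ((t:ℝ)/(t+2)) = ((t:ℝ)+1) * ww (t+1) := by
  have h1 := ht' ht
  apply sq_eq_of_nonneg'
    (mul_nonneg (mul_nonneg (by positivity) (ww_nonneg t)) (Real.sqrt_nonneg _))
    (mul_nonneg (by positivity) (ww_nonneg _))
  simp only [mul_pow]
  rw [sqk'_sq ht, ww_sq ht, ww_sq (show 1 ≤ t+1 by omega)]
  push_cast
  field_simp
  ring

lemma step2 (ht : 1 ≤ t) :
    ww t * Real.sqrt ((t:ℝ)/(t+2)) = ww (t+1) := by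
  have h1 := ht' ht
  apply sq_eq_of_nonneg'
    (mul_nonneg (ww_nonneg t) (Real.sqrt_nonneg _)) (ww_nonneg _)
  simp only [mul_pow]
  rw [sqk'_sq ht, ww_sq ht, ww_sq (show 1 ≤ t+1 by omega)]
  push_cast
  field_simp
  ring

lemma sqk_cancel (ht : 1 ≤ t) :
    Real.sqrt (((t:ℝ)+2)/t) * Real.sqrt ((t:ℝ)/(t+2)) = 1 := by
  have h1 := ht' ht
  rw [← Real.sqrt_mul (by positivity)]
  rw [show ((t:ℝ)+2)/t * ((t:ℝ)/(t+2)) = 1 by field_simp]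
  exact Real.sqrt_one

end step

/-- exp-weights. -/
noncomputable def Pw (v : Fin 2 → ℝ) (i : Fin 3) : ℝ := Real.exp (-(M3.mulVec v i))

lemma mulVec_M3 (v : Fin 2 → ℝ) :
    M3.mulVec v = ![v 0 - v 1, v 1 - v 0, v 0 + v 1] := by
  funext i
  fin_cases i <;>
    simp [M3, Matrix.mulVec, dotProduct, Fin.sum_univ_two] <;> ring

lemma Pw0 (v : Fin 2 → ℝ) : Pw v 0 = Real.exp (v 1 - v 0) := by
  simp [Pw, mulVec_M3]
lemma Pw1 (v : Fin 2 → ℝ) : Pw v 1 = Real.exp (v 0 - v 1) := by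
  simp [Pw, mulVec_M3]
lemma Pw2 (v : Fin 2 → ℝ) : Pw v 2 = Real.exp (-(v 0 + v 1)) := by
  simp [Pw, mulVec_M3]

lemma Pw_pos (v : Fin 2 → ℝ) (i : Fin 3) : 0 < Pw v i := Real.exp_pos _

lemma M3_00 : M3 0 0 = 1 := by rw [M3]; norm_num [Matrix.vecHead, Matrix.vecTail]
lemma M3_01 : M3 0 1 = -1 := by rw [M3]; norm_num [Matrix.vecHead, Matrix.vecTail]
lemma M3_10 : M3 1 0 = -1 := by rw [M3]; norm_num [Matrix.vecHead, Matrix.vecTail]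
lemma M3_11 : M3 1 1 = 1 := by rw [M3]; norm_num [Matrix.vecHead, Matrix.vecTail]
lemma M3_20 : M3 2 0 = 1 := by rw [M3]; norm_num [Matrix.vecHead, Matrix.vecTail, Matrix.cons_val_two]
lemma M3_21 : M3 2 1 = 1 := by rw [M3]; norm_num [Matrix.vecHead, Matrix.vecTail, Matrix.cons_val_two]

lemma corr_sum (v : Fin 2 → ℝ) (c : Fin 2) :
    ∑ i, wt M3 v i * M3 i c =
      (Pw v 0 * M3 0 c + Pw v 1 * M3 1 c + Pw v 2 * M3 2 c) /
        (Pw v 0 + Pw v 1 + Pw v 2) := by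
  simp only [wt, Pw, Fin.sum_univ_three]
  ring

lemma expLoss_M3 (v : Fin 2 → ℝ) :
    expLoss M3 v = (Pw v 0 + Pw v 1 + Pw v 2) / 3 := by
  simp only [expLoss, Pw, Fin.sum_univ_three]
  norm_num
  ring

/-- Invariant after round `t ≥ 1`. -/
def AInv (t : ℕ) (v : Fin 2 → ℝ) : Prop :=
  Pw v 2 = ww t ∧
    ((Pw v 0 = t * ww t ∧ Pw v 1 = (t+1) * ww t) ∨
     (Pw v 0 = (t+1) * ww t ∧ Pw v 1 = t * ww t))

lemma fin2_cases (x : Fin 2) : x = 0 ∨ x = 1 := by omega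

lemma inv_step (lam : ℕ → Fin 2 → ℝ) (j : ℕ → Fin 2) (r : ℕ → ℝ)
    (hAda : IsAdaBoost M3 lam j r) (t : ℕ) (ht : 1 ≤ t)
    (hInv : AInv t (lam t)) : AInv (t+1) (lam (t+1)) := by
  obtain ⟨hmax, hr, hupd⟩ := hAda.2 t
  have hT : (1:ℝ) ≤ (t:ℝ) := ht' ht
  have ht0 : (t:ℝ) ≠ 0 := by linarith
  have ht1 : (t:ℝ) + 1 ≠ 0 := by linarith
  have hw : 0 < ww t := ww_pos ht
  obtain ⟨h2, hor⟩ := hInv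
  set v := lam t with hv
  have hkpos : (0:ℝ) < ((t:ℝ)+2)/t := by positivity
  have hEa : Real.exp ((1/2 : ℝ) * Real.log (((t:ℝ)+2)/t))
      = Real.sqrt (((t:ℝ)+2)/t) := exp_half_log hkpos
  have hEa' : Real.exp (-((1/2 : ℝ) * Real.log (((t:ℝ)+2)/t)))
      = Real.sqrt ((t:ℝ)/(t+2)) := by
    rw [Real.exp_neg, hEa]
    exact inv_eq_of_mul_eq_one_right (sqk_cancel ht)
  rcases hor with ⟨h0, h1⟩ | ⟨h0, h1⟩
  · -- case A : Pw0 = t·w, Pw1 = (t+1)·w ; j t = 1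
    have hc0 : ∑ i, wt M3 v i * M3 i 0 = 0 := by
      rw [corr_sum, M3_00, M3_10, M3_20, div_eq_zero_iff]
      left; rw [h0, h1, h2]; ring
    have hc1 : ∑ i, wt M3 v i * M3 i 1 = 1/((t:ℝ)+1) := by
      rw [corr_sum, M3_01, M3_11, M3_21, h0, h1, h2]
      rw [show (t:ℝ) * ww t * (-1) + ((t:ℝ)+1) * ww t * 1 + ww t * 1 = 2 * ww t by ring,
          show (t:ℝ) * ww t + ((t:ℝ)+1) * ww t + ww t = (2*((t:ℝ)+1)) * ww t by ring]
      rw [mul_div_mul_right _ _ (ne_of_gt hw)]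
      field_simp
    have hj : j t = 1 := by
      rcases fin2_cases (j t) with hj0 | hj1
      · exfalso
        have hm := hmax 1
        rw [hj0, hc0, hc1] at hm
        have : (0:ℝ) < |1/((t:ℝ)+1)| := by positivity
        simp only [abs_zero] at hm
        linarith
      · exact hj1
    have hrt : r t = 1/((t:ℝ)+1) := by rw [hr, hj, hc1]
    have hratio : (1 + r t) / (1 - r t) = ((t:ℝ)+2)/t := by
      rw [hrt]; field_simp; rw [add_sub_cancel_right, mul_div_cancel_left₀ _ ht0]; ring
    have e0 : lam (t+1) 0 = v 0 := by
      rw [hupd, hj]; simp [Pi.single_eq_of_ne]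
    have e1 : lam (t+1) 1 = v 1 + (1/2 : ℝ) * Real.log (((t:ℝ)+2)/t) := by
      rw [hupd, hj, hratio]; simp
    refine ⟨?_, Or.inr ⟨?_, ?_⟩⟩
    · have : Pw (lam (t+1)) 2 = Pw v 2 *
          Real.exp (-((1/2 : ℝ) * Real.log (((t:ℝ)+2)/t))) := by
        rw [Pw2, Pw2, e0, e1, ← Real.exp_add]; ring_nf
      rw [this, h2, hEa', step2 ht]
    · have : Pw (lam (t+1)) 0 = Pw v 0 *
          Real.exp ((1/2 : ℝ) * Real.log (((t:ℝ)+2)/t)) := by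
        rw [Pw0, Pw0, e0, e1, ← Real.exp_add]; ring_nf
      rw [this, h0, hEa, step0 ht]
      push_cast; ring
    · have : Pw (lam (t+1)) 1 = Pw v 1 *
          Real.exp (-((1/2 : ℝ) * Real.log (((t:ℝ)+2)/t))) := by
        rw [Pw1, Pw1, e0, e1, ← Real.exp_add]; ring_nf
      rw [this, h1, hEa', step1 ht]
      push_cast; ring
  · -- case B : Pw0 = (t+1)·w, Pw1 = t·w ; j t = 0
    have hc1 : ∑ i, wt M3 v i * M3 i 1 = 0 := by
      rw [corr_sum, M3_01, M3_11, M3_21, div_eq_zero_iff]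
      left; rw [h0, h1, h2]; ring
    have hc0 : ∑ i, wt M3 v i * M3 i 0 = 1/((t:ℝ)+1) := by
      rw [corr_sum, M3_00, M3_10, M3_20, h0, h1, h2]
      rw [show ((t:ℝ)+1) * ww t * 1 + (t:ℝ) * ww t * (-1) + ww t * 1 = 2 * ww t by ring,
          show ((t:ℝ)+1) * ww t + (t:ℝ) * ww t + ww t = (2*((t:ℝ)+1)) * ww t by ring]
      rw [mul_div_mul_right _ _ (ne_of_gt hw)]
      field_simp
    have hj : j t = 0 := by
      rcases fin2_cases (j t) with hj0 | hj1
      · exact hj0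
      · exfalso
        have hm := hmax 0
        rw [hj1, hc1, hc0] at hm
        have : (0:ℝ) < |1/((t:ℝ)+1)| := by positivity
        simp only [abs_zero] at hm
        linarith
    have hrt : r t = 1/((t:ℝ)+1) := by rw [hr, hj, hc0]
    have hratio : (1 + r t) / (1 - r t) = ((t:ℝ)+2)/t := by
      rw [hrt]; field_simp; rw [add_sub_cancel_right, mul_div_cancel_left₀ _ ht0]; ring
    have e0 : lam (t+1) 0 = v 0 + (1/2 : ℝ) * Real.log (((t:ℝ)+2)/t) := by
      rw [hupd, hj, hratio]; simp
    have e1 : lam (t+1) 1 = v 1 := by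
      rw [hupd, hj]; simp [Pi.single_eq_of_ne]
    refine ⟨?_, Or.inl ⟨?_, ?_⟩⟩
    · have : Pw (lam (t+1)) 2 = Pw v 2 *
          Real.exp (-((1/2 : ℝ) * Real.log (((t:ℝ)+2)/t))) := by
        rw [Pw2, Pw2, e0, e1, ← Real.exp_add]; ring_nf
      rw [this, h2, hEa', step2 ht]
    · have : Pw (lam (t+1)) 0 = Pw v 0 *
          Real.exp (-((1/2 : ℝ) * Real.log (((t:ℝ)+2)/t))) := by
        rw [Pw0, Pw0, e0, e1, ← Real.exp_add]; ring_nf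
      rw [this, h0, hEa', step1 ht]
      push_cast; ring
    · have : Pw (lam (t+1)) 1 = Pw v 1 *
          Real.exp ((1/2 : ℝ) * Real.log (((t:ℝ)+2)/t)) := by
        rw [Pw1, Pw1, e0, e1, ← Real.exp_add]; ring_nf
      rw [this, h1, hEa, step0 ht]
      push_cast; ring

lemma ww_one : ww 1 = (Real.sqrt 2)⁻¹ := by
  have h2 : Real.sqrt 2 > 0 := by positivity
  apply sq_eq_of_nonneg' (ww_nonneg 1) (by positivity)
  rw [ww_sq le_rfl, inv_pow, Real.sq_sqrt (by norm_num : (0:ℝ) ≤ 2)]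
  norm_num

lemma inv_base (lam : ℕ → Fin 2 → ℝ) (j : ℕ → Fin 2) (r : ℕ → ℝ)
    (hAda : IsAdaBoost M3 lam j r) : AInv 1 (lam 1) := by
  obtain ⟨h00, hstep⟩ := hAda
  obtain ⟨hmax, hr, hupd⟩ := hstep 0
  have hP0 : Pw (lam 0) 0 = 1 := by rw [Pw0, h00]; simp
  have hP1 : Pw (lam 0) 1 = 1 := by rw [Pw1, h00]; simp
  have hP2 : Pw (lam 0) 2 = 1 := by rw [Pw2, h00]; simp
  have hc0 : ∑ i, wt M3 (lam 0) i * M3 i 0 = 1/3 := by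
    rw [corr_sum, M3_00, M3_10, M3_20, hP0, hP1, hP2]; norm_num
  have hc1 : ∑ i, wt M3 (lam 0) i * M3 i 1 = 1/3 := by
    rw [corr_sum, M3_01, M3_11, M3_21, hP0, hP1, hP2]; norm_num
  have hrt : r 0 = 1/3 := by
    rw [hr]; rcases fin2_cases (j 0) with h | h <;> rw [h] <;> assumption
  have hratio : (1 + r 0) / (1 - r 0) = 2 := by rw [hrt]; norm_num
  have hEa : Real.exp ((1/2 : ℝ) * Real.log 2) = Real.sqrt 2 :=
    exp_half_log (by norm_num)
  have hEa' : Real.exp (-((1/2 : ℝ) * Real.log 2)) = ww 1 := by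
    rw [Real.exp_neg, hEa, ww_one]
  have hsq2 : Real.sqrt 2 = 2 * ww 1 := by
    apply sq_eq_of_nonneg' (Real.sqrt_nonneg 2)
      (mul_nonneg (by norm_num) (ww_nonneg 1))
    rw [mul_pow, ww_sq le_rfl, Real.sq_sqrt (by norm_num : (0:ℝ) ≤ 2)]
    norm_num
  have cast1 : ((1:ℕ):ℝ) = 1 := by norm_num
  norm_num at hupd
  rcases fin2_cases (j 0) with hj | hj
  · have e0 : lam 1 0 = (1/2 : ℝ) * Real.log 2 := by
      rw [hupd, hj, hratio, h00]; simp
    have e1 : lam 1 1 = 0 := by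
      rw [hupd, hj, h00]
      simp [Pi.single_eq_of_ne]
    refine ⟨?_, Or.inl ⟨?_, ?_⟩⟩
    · rw [Pw2, e0, e1, show -(1/2 * Real.log 2 + 0) = -(1/2 * Real.log 2) by ring, hEa']
    · rw [Pw0, e0, e1, show (0:ℝ) - 1/2 * Real.log 2 = -(1/2 * Real.log 2) by ring,
        hEa', cast1, one_mul]
    · rw [Pw1, e0, e1, show 1/2 * Real.log 2 - (0:ℝ) = 1/2 * Real.log 2 by ring,
        hEa, cast1, hsq2]
      norm_num
  · have e1 : lam 1 1 = (1/2 : ℝ) * Real.log 2 := by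
      rw [hupd, hj, hratio, h00]; simp
    have e0 : lam 1 0 = 0 := by
      rw [hupd, hj, h00]
      simp [Pi.single_eq_of_ne]
    refine ⟨?_, Or.inr ⟨?_, ?_⟩⟩
    · rw [Pw2, e0, e1, show -((0:ℝ) + 1/2 * Real.log 2) = -(1/2 * Real.log 2) by ring, hEa']
    · rw [Pw0, e0, e1, show 1/2 * Real.log 2 - (0:ℝ) = 1/2 * Real.log 2 by ring,
        hEa, cast1, hsq2]
      norm_num
    · rw [Pw1, e0, e1, show (0:ℝ) - 1/2 * Real.log 2 = -(1/2 * Real.log 2) by ring,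
        hEa', cast1, one_mul]

/-- On the matrix `M3`, whose optimal exponential loss is `2/3`, every run
of AdaBoost satisfies `L(λ^T) ≥ 2/3 + 2/(9T)` for all `T ≥ 1`; consequently for any
`0 < ε < 1/3`, at least `2/(9ε)` rounds are needed to reach loss `2/3 + ε`. -/
theorem adaboost_eps_lower_bound
    (lam : ℕ → Fin 2 → ℝ) (j : ℕ → Fin 2) (r : ℕ → ℝ)
    (hAda : IsAdaBoost M3 lam j r) :
    (⨅ lam' : Fin 2 → ℝ, expLoss M3 lam') = 2 / 3 ∧
    (∀ T : ℕ, 1 ≤ T → 2 / 3 + 2 / (9 * (T : ℝ)) ≤ expLoss M3 (lam T)) ∧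
    (∀ ε : ℝ, 0 < ε → ε < 1 / 3 →
      ∀ T : ℕ, expLoss M3 (lam T) ≤ 2 / 3 + ε → 2 / (9 * ε) ≤ (T : ℝ)) := by
  have hInv : ∀ T, 1 ≤ T → AInv T (lam T) := by
    intro T hT
    induction T with
    | zero => omega
    | succ t ih =>
      by_cases h0 : t = 0
      · subst h0; exact inv_base lam j r hAda
      · exact inv_step lam j r hAda t (by omega) (ih (by omega))
  have hloss : ∀ T, 1 ≤ T → expLoss M3 (lam T) = (2*(T:ℝ)+2) * ww T / 3 := by
    intro T hT
    obtain ⟨h2, hor⟩ := hInv T hT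
    rw [expLoss_M3]
    rcases hor with ⟨h0, h1⟩ | ⟨h0, h1⟩ <;> rw [h0, h1, h2] <;> ring
  have hbound : ∀ T : ℕ, 1 ≤ T → 2/3 + 2/(9*(T:ℝ)) ≤ expLoss M3 (lam T) := by
    intro T hT
    rw [hloss T hT]
    have hW : 0 < ww T := ww_pos hT
    have hT1 : (1:ℝ) ≤ (T:ℝ) := ht' hT
    have key : (T:ℝ)*((T:ℝ)+1)*(ww T)^2 = 1 := by
      rw [ww_sq hT]; field_simp
    have h3 : (0:ℝ) < 3*(T:ℝ)*((T:ℝ)+1) := by nlinarith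
    have hf2 : (0:ℝ) < 3*(T:ℝ)*((T:ℝ)+1)*(ww T) + (3*(T:ℝ)+1) :=
      add_pos (mul_pos h3 hW) (by nlinarith)
    have hprod : (3*(T:ℝ)*((T:ℝ)+1)*(ww T) - (3*(T:ℝ)+1)) *
        (3*(T:ℝ)*((T:ℝ)+1)*(ww T) + (3*(T:ℝ)+1)) = 3*(T:ℝ) - 1 := by
      linear_combination (9*(T:ℝ)*((T:ℝ)+1)) * key
    have hf1 : 0 ≤ 3*(T:ℝ)*((T:ℝ)+1)*(ww T) - (3*(T:ℝ)+1) := by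
      nlinarith [hprod, hf2]
    have heq : (2*(T:ℝ)+2)*(ww T)/3 - (2/3 + 2/(9*(T:ℝ))) =
        2*(3*(T:ℝ)*((T:ℝ)+1)*(ww T) - (3*(T:ℝ)+1))/(9*(T:ℝ)) := by
      field_simp
      ring
    have hnn : (0:ℝ) ≤ 2*(3*(T:ℝ)*((T:ℝ)+1)*(ww T) - (3*(T:ℝ)+1))/(9*(T:ℝ)) :=
      div_nonneg (by linarith) (by linarith)
    linarith
  have hlb : ∀ v : Fin 2 → ℝ, 2/3 ≤ expLoss M3 v := by
    intro v
    rw [expLoss_M3, Pw0, Pw1, Pw2]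
    have hmul : Real.exp (v 1 - v 0) * Real.exp (v 0 - v 1) = 1 := by
      rw [← Real.exp_add, show (v 1 - v 0) + (v 0 - v 1) = 0 by ring, Real.exp_zero]
    nlinarith [Real.exp_pos (v 1 - v 0), Real.exp_pos (v 0 - v 1),
      Real.exp_pos (-(v 0 + v 1)), hmul,
      mul_nonneg (sq_nonneg (Real.exp (v 1 - v 0) - 1)) (Real.exp_pos (v 0 - v 1)).le]
  have hbdd : BddBelow (Set.range fun v : Fin 2 → ℝ => expLoss M3 v) := by
    refine ⟨2/3, ?_⟩
    rintro x ⟨v, rfl⟩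
    exact hlb v
  refine ⟨?_, hbound, ?_⟩
  · apply le_antisymm
    · apply le_of_forall_pos_le_add
      intro ε hε
      set a : ℝ := -(Real.log (3*ε))/2 with ha
      have hval : expLoss M3 ![a, a] = 2/3 + ε := by
        rw [expLoss_M3, Pw0, Pw1, Pw2]
        simp only [Matrix.cons_val_zero, Matrix.cons_val_one, Matrix.head_cons]
        rw [sub_self, Real.exp_zero,
          show -(a + a) = Real.log (3*ε) by rw [ha]; ring,
          Real.exp_log (by linarith)]
        ring
      calc (⨅ lam' : Fin 2 → ℝ, expLoss M3 lam') ≤ expLoss M3 ![a, a] :=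
            ciInf_le hbdd _
        _ = 2/3 + ε := hval
    · exact le_ciInf hlb
  · intro ε hε hε3 T hLe
    rcases Nat.eq_zero_or_pos T with hT0 | hT1
    · exfalso
      subst hT0
      rw [hAda.1, expLoss_M3, Pw0, Pw1, Pw2] at hLe
      simp only [Pi.zero_apply, sub_self, Real.exp_zero, neg_zero, add_zero] at hLe
      norm_num at hLe
      linarith
    · have hb := hbound T hT1
      have hT1' : (1:ℝ) ≤ (T:ℝ) := ht' hT1
      have h1 : 2/(9*(T:ℝ)) ≤ ε := by linarith
      rw [div_le_iff₀ (by linarith : (0:ℝ) < 9*(T:ℝ))] at h1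
      rw [div_le_iff₀ (by linarith : (0:ℝ) < 9*ε)]
      nlinarith
end

section
/- Suppose u₀, u₁, u₂, … are strictly positive real numbers satisfying u_t − u_{t+1} ≥ c₀·u_t^{1+c₁} for all t, where c₀ ≥ 0 and c₁ ≥ 0 are constants. Then for every t, u_t^{−c₁} − u₀^{−c₁} ≥ c₁·c₀·t. -/
lemma bernoulli_neg_aux (y p : ℝ) (hy : 0 < y) (hp : 0 ≤ p) :
    1 - p * (y - 1) ≤ y ^ (-p) := by
  rcases le_or_gt (1 - p * (y - 1)) 0 with h | h
  · exact h.trans (Real.rpow_pos_of_pos hy _).le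
  · have hpos : 0 < y ^ p := Real.rpow_pos_of_pos hy p
    have key : y ^ p * (1 - p * (y - 1)) ≤ 1 := by
      have e1 : y ^ p ≤ Real.exp (p * (y - 1)) := by
        rw [Real.rpow_def_of_pos hy]
        exact Real.exp_le_exp.mpr (by nlinarith [Real.log_le_sub_one_of_pos hy])
      have e2 : 1 - p * (y - 1) ≤ Real.exp (-(p * (y - 1))) := by
        have := Real.add_one_le_exp (-(p * (y - 1))); linarith
      calc y ^ p * (1 - p * (y - 1))
          ≤ Real.exp (p * (y - 1)) * Real.exp (-(p * (y - 1))) :=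
            mul_le_mul e1 e2 h.le (Real.exp_pos _).le
        _ = 1 := by rw [← Real.exp_add, add_neg_cancel, Real.exp_zero]
    rw [Real.rpow_neg hy.le]
    refine le_of_mul_le_mul_right ?_ hpos
    rw [inv_mul_cancel₀ hpos.ne']
    nlinarith [key]

lemma step_lemma (x y c₀ c₁ : ℝ) (hx : 0 < x) (hy : 0 < y) (hc₀ : 0 ≤ c₀) (hc₁ : 0 ≤ c₁)
    (h : c₀ * x ^ (1 + c₁) ≤ x - y) : x ^ (-c₁) + c₁ * c₀ ≤ y ^ (-c₁) := by
  have h1 := bernoulli_neg_aux (y / x) c₁ (div_pos hy hx) hc₁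
  have hxp : (0:ℝ) < x ^ c₁ := Real.rpow_pos_of_pos hx c₁
  have hxn : (0:ℝ) < x ^ (-c₁) := Real.rpow_pos_of_pos hx _
  have hyn : (0:ℝ) < y ^ (-c₁) := Real.rpow_pos_of_pos hy _
  have hsplit : x ^ (1 + c₁) = x * x ^ c₁ := by
    rw [Real.rpow_add hx, Real.rpow_one]
  have hkey : (y / x) ^ (-c₁) = y ^ (-c₁) * x ^ c₁ := by
    rw [Real.div_rpow hy.le hx.le, Real.rpow_neg hx.le, div_eq_mul_inv, inv_inv]
  rw [hkey] at h1
  have hmul : x ^ c₁ * x ^ (-c₁) = 1 := by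
    rw [← Real.rpow_add hx, add_neg_cancel, Real.rpow_zero]
  have h2 : c₀ * x ^ c₁ + y / x ≤ 1 := by
    rw [← sub_nonneg]
    have e : 1 - (c₀ * x ^ c₁ + y / x) = (x - (c₀ * (x * x ^ c₁) + y)) / x := by
      field_simp
    rw [e]
    apply div_nonneg _ hx.le
    rw [hsplit] at h; linarith
  have h2' : c₁ * (c₀ * x ^ c₁) ≤ c₁ * (1 - y / x) :=
    mul_le_mul_of_nonneg_left (by linarith) hc₁
  have h3 : 1 + c₁ * (c₀ * x ^ c₁) ≤ y ^ (-c₁) * x ^ c₁ := by nlinarith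
  nlinarith [mul_le_mul_of_nonneg_right h3 hxn.le, hmul]

/-- If strictly positive reals `u₀, u₁, …` satisfy
`u_t − u_{t+1} ≥ c₀·u_t^{1+c₁}` with `c₀, c₁ ≥ 0`, then for every `t`,
`u_t^{−c₁} − u₀^{−c₁} ≥ c₁·c₀·t`.  (Real powers.) -/
theorem recurrence_lemma (u : ℕ → ℝ) (hu : ∀ t, 0 < u t)
    (c₀ c₁ : ℝ) (hc₀ : 0 ≤ c₀) (hc₁ : 0 ≤ c₁)
    (hrec : ∀ t : ℕ, c₀ * u t ^ (1 + c₁) ≤ u t - u (t + 1)) (t : ℕ) :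
    c₁ * c₀ * (t : ℝ) ≤ u t ^ (-c₁) - u 0 ^ (-c₁) := by
  induction t with
  | zero => simp
  | succ n ih =>
    have := step_lemma (u n) (u (n+1)) c₀ c₁ (hu n) (hu (n+1)) hc₀ hc₁ (hrec n)
    push_cast
    linarith
end

section
/- If A is an invertible n×n real matrix all of whose entries lie in {−1, 0, +1}, then for every x ∈ ℝⁿ with ‖x‖ = 1 one has ‖Ax‖ ≥ 1/n!; equivalently, ‖Ax‖ ≥ ‖x‖/n! for all x ∈ ℝⁿ, where ‖·‖ is the Euclidean norm. -/
open Finset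

lemma card_perm_fix (n : ℕ) (i j : Fin (n+1)) :
    Fintype.card {σ : Equiv.Perm (Fin (n+1)) // σ i = j} = n.factorial := by
  have e1 : {σ : Equiv.Perm (Fin (n+1)) // σ i = j} ≃
      {σ : Equiv.Perm (Fin (n+1)) // σ 0 = j} :=
    { toFun := fun σ => ⟨σ.1 * Equiv.swap 0 i, by
        simp [Equiv.Perm.mul_apply, σ.2]⟩
      invFun := fun σ => ⟨σ.1 * Equiv.swap 0 i, by
        simp [Equiv.Perm.mul_apply, σ.2]⟩
      left_inv := fun σ => by
        ext y; simp [Equiv.Perm.mul_apply]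
      right_inv := fun σ => by
        ext y; simp [Equiv.Perm.mul_apply] }
  have key : ∀ σ : Equiv.Perm (Fin (n+1)), (Equiv.Perm.decomposeFin σ).1 = σ 0 := by
    intro σ
    have := Equiv.Perm.decomposeFin_symm_apply_zero
      (Equiv.Perm.decomposeFin σ).1 (Equiv.Perm.decomposeFin σ).2
    rw [Prod.mk.eta, Equiv.symm_apply_apply] at this
    exact this.symm
  have e2 : {σ : Equiv.Perm (Fin (n+1)) // σ 0 = j} ≃ Equiv.Perm (Fin n) :=
    { toFun := fun σ => (Equiv.Perm.decomposeFin σ.1).2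
      invFun := fun e => ⟨Equiv.Perm.decomposeFin.symm (j, e), by
        simp [Equiv.Perm.decomposeFin_symm_apply_zero]⟩
      left_inv := fun σ => by
        apply Subtype.ext
        have h0 : (Equiv.Perm.decomposeFin σ.1).1 = j := by rw [key, σ.2]
        show Equiv.Perm.decomposeFin.symm (j, (Equiv.Perm.decomposeFin σ.1).2) = σ.1
        have hp : ((j, (Equiv.Perm.decomposeFin σ.1).2) :
            Fin (n+1) × Equiv.Perm (Fin n)) = Equiv.Perm.decomposeFin σ.1 := by
          conv_rhs => rw [← Prod.mk.eta (p := Equiv.Perm.decomposeFin σ.1)]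
          rw [h0]
        rw [hp, Equiv.symm_apply_apply]
      right_inv := fun e => by
        simp }
  rw [Fintype.card_congr (e1.trans e2), Fintype.card_perm, Fintype.card_fin]

lemma det_updateRow_bound {n : ℕ} (A : Matrix (Fin (n+1)) (Fin (n+1)) ℝ)
    (h1 : ∀ a b, |A a b| ≤ 1) (i j : Fin (n+1)) :
    |(A.updateRow j (Pi.single i 1)).det| ≤ (n.factorial : ℝ) := by
  set M := A.updateRow j (Pi.single i 1) with hM
  have hM1 : ∀ a b, |M a b| ≤ 1 := by
    intro a b
    by_cases h : a = j
    · subst h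
      simp only [hM, Matrix.updateRow_self]
      by_cases hb : b = i
      · subst hb; simp
      · simp [Pi.single_eq_of_ne hb]
    · simp only [hM, Matrix.updateRow_ne h]; exact h1 a b
  have hM0 : ∀ b, b ≠ i → M j b = 0 := by
    intro b hb
    simp [hM, Pi.single_eq_of_ne hb]
  calc |M.det| = |∑ σ : Equiv.Perm (Fin (n+1)), Equiv.Perm.sign σ • ∏ c, M (σ c) c| := by
        rw [Matrix.det_apply]
    _ ≤ ∑ σ : Equiv.Perm (Fin (n+1)), |Equiv.Perm.sign σ • ∏ c, M (σ c) c| :=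
        Finset.abs_sum_le_sum_abs _ _
    _ ≤ ∑ σ : Equiv.Perm (Fin (n+1)), if σ i = j then (1:ℝ) else 0 := by
        apply Finset.sum_le_sum
        intro σ _
        have habs : |Equiv.Perm.sign σ • ∏ c, M (σ c) c| = ∏ c, |M (σ c) c| := by
          rcases Int.units_eq_one_or (Equiv.Perm.sign σ) with h | h <;>
            simp [h, Units.smul_def, Finset.abs_prod]
        rw [habs]
        by_cases hσ : σ i = j
        · rw [if_pos hσ]
          exact Finset.prod_le_one (fun c _ => abs_nonneg _) (fun c _ => hM1 _ _)
        · rw [if_neg hσ]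
          have hc : σ (σ.symm j) = j := σ.apply_symm_apply j
          have hne : σ.symm j ≠ i := by
            intro h; apply hσ; rw [← h, hc]
          rw [Finset.prod_eq_zero (Finset.mem_univ (σ.symm j))]
          rw [hc, hM0 _ hne, abs_zero]
    _ = (n.factorial : ℝ) := by
        rw [Finset.sum_boole]
        rw [← Fintype.card_subtype, card_perm_fix]

/-- If `A` is an invertible `n×n` real matrix with entries in `{−1,0,+1}`,
then `‖Ax‖ ≥ ‖x‖/n!` for every `x ∈ ℝⁿ` (Euclidean norm). -/
theorem sign_matrix_norm_lower_bound {n : ℕ} (A : Matrix (Fin n) (Fin n) ℝ)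
    (hent : ∀ i j, A i j = -1 ∨ A i j = 0 ∨ A i j = 1)
    (hinv : IsUnit A) (x : Fin n → ℝ) :
    Real.sqrt (∑ i, x i ^ 2) / (n.factorial : ℝ) ≤
      Real.sqrt (∑ i, A.mulVec x i ^ 2) := by
  obtain rfl | hn := Nat.eq_zero_or_pos n
  · simp
  obtain ⟨m, rfl⟩ : ∃ m, n = m + 1 := ⟨n - 1, (Nat.succ_pred_eq_of_pos hn).symm⟩
  have hA1 : ∀ i j, |A i j| ≤ 1 := by
    intro i j; rcases hent i j with h | h | h <;> rw [h] <;> norm_num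
  have hdet : IsUnit A.det := (Matrix.isUnit_iff_isUnit_det A).mp hinv
  have hdet_ne : A.det ≠ 0 := hdet.ne_zero
  set Z : Matrix (Fin (m+1)) (Fin (m+1)) ℤ :=
    fun i j => if A i j = -1 then -1 else if A i j = 1 then 1 else 0 with hZ
  have hAZ : A = Z.map (Int.cast : ℤ → ℝ) := by
    ext i j
    rcases hent i j with h | h | h <;> simp only [Matrix.map_apply] <;> simp [hZ, h] <;> norm_num
  have hdetZ : A.det = ((Z.det : ℤ) : ℝ) := by
    have h := RingHom.map_det (Int.castRingHom ℝ) Z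
    rw [hAZ]
    rw [RingHom.mapMatrix_apply] at h
    exact h.symm
  have hZdet_ne : Z.det ≠ 0 := by
    intro h; apply hdet_ne; rw [hdetZ, h]; simp
  have hdet_ge : (1:ℝ) ≤ |A.det| := by
    rw [hdetZ, ← Int.cast_abs]
    exact_mod_cast Int.one_le_abs hZdet_ne
  have hBent : ∀ i j, |A⁻¹ i j| ≤ (m.factorial : ℝ) := by
    intro i j
    rw [Matrix.inv_def, Ring.inverse_eq_inv']
    simp only [Matrix.smul_apply, smul_eq_mul, abs_mul, abs_inv]
    have hadj : |A.adjugate i j| ≤ (m.factorial : ℝ) := by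
      rw [Matrix.adjugate_apply]
      exact det_updateRow_bound A hA1 i j
    calc |A.det|⁻¹ * |A.adjugate i j| ≤ 1 * (m.factorial : ℝ) := by
          apply mul_le_mul _ hadj (abs_nonneg _) (by norm_num)
          rw [inv_le_one_iff₀]; right; exact hdet_ge
      _ = (m.factorial : ℝ) := one_mul _
  set y := A.mulVec x with hy
  have hxy : A⁻¹.mulVec y = x := by
    rw [hy, Matrix.mulVec_mulVec, Matrix.nonsing_inv_mul A hdet, Matrix.one_mulVec]
  have hyn : (0:ℝ) ≤ ∑ i, y i ^ 2 := Finset.sum_nonneg fun i _ => sq_nonneg _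
  have key : ∑ i, x i ^ 2 ≤ (((m+1).factorial : ℝ))^2 * ∑ i, y i ^ 2 := by
    calc ∑ i, x i ^ 2 = ∑ i, (∑ j, A⁻¹ i j * y j) ^ 2 := by
          rw [← hxy]; rfl
      _ ≤ ∑ i : Fin (m+1), (∑ j, (A⁻¹ i j)^2) * (∑ j, y j ^ 2) := by
          apply Finset.sum_le_sum
          intro i _
          exact Finset.sum_mul_sq_le_sq_mul_sq _ _ _
      _ ≤ ∑ _i : Fin (m+1), (((m+1:ℕ):ℝ) * (m.factorial : ℝ)^2) * (∑ j, y j ^ 2) := by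
          apply Finset.sum_le_sum
          intro i _
          apply mul_le_mul_of_nonneg_right _ hyn
          calc ∑ j, (A⁻¹ i j)^2 ≤ ∑ _j : Fin (m+1), (m.factorial : ℝ)^2 := by
                apply Finset.sum_le_sum
                intro j _
                rw [← sq_abs]
                exact pow_le_pow_left₀ (abs_nonneg _) (hBent i j) 2
            _ = ((m+1:ℕ):ℝ) * (m.factorial : ℝ)^2 := by
                rw [Finset.sum_const, Finset.card_univ, Fintype.card_fin, nsmul_eq_mul]
      _ = (((m+1).factorial : ℝ))^2 * ∑ i, y i ^ 2 := by
          rw [Finset.sum_const, Finset.card_univ, Fintype.card_fin, nsmul_eq_mul]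
          have : ((m+1).factorial : ℝ) = ((m+1:ℕ):ℝ) * (m.factorial : ℝ) := by
            rw [Nat.factorial_succ]; push_cast; ring
          rw [this]; push_cast; ring
  have hfac_pos : (0:ℝ) < ((m+1).factorial : ℝ) := by positivity
  rw [div_le_iff₀ hfac_pos]
  calc Real.sqrt (∑ i, x i ^ 2) ≤ Real.sqrt ((((m+1).factorial : ℝ))^2 * ∑ i, y i ^ 2) :=
        Real.sqrt_le_sqrt key
    _ = ((m+1).factorial : ℝ) * Real.sqrt (∑ i, y i ^ 2) := by
        rw [Real.sqrt_mul (sq_nonneg _), Real.sqrt_sq hfac_pos.le]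
    _ = Real.sqrt (∑ i, y i ^ 2) * ((m+1).factorial : ℝ) := mul_comm _ _
end
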